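/- Fix parameters α > 0, γ > 0 with α + γ < 1, ξ > 1, ψ ∈ (0,1), λ_x > 0, λ_θ > 0, and z_t > 0, and set D := 1 + (1−α−γ)(ξ−1). Then the equation −λ = (((ξ−1)(γ−ψ(1−α))−ψ)/(γD))·(λ/λ_x)^ψ − ((1+(ξ−1)(1−α))/D)·z_t − λ_θ has a unique solution λ in [0,∞), and this solution is strictly positive. -/

import Mathlib

set_option maxHeartbeats 1000000

/-- Bernoulli-type concavity estimate: for `0 < u < v` and `0 < ψ < 1`,
`v ^ ψ - u ^ ψ ≤ ψ * u ^ (ψ - 1) * (v - u)`. -/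
lemma aux_rpow_sub_le (u v ψ : ℝ) (hu : 0 < u) (huv : u < v)
    (hψ0 : 0 < ψ) (hψ1 : ψ < 1) :
    v ^ ψ - u ^ ψ ≤ ψ * u ^ (ψ - 1) * (v - u) := by
  have hs : -1 ≤ v / u - 1 := by
    have : 0 < v / u := div_pos (hu.trans huv) hu
    linarith
  have hber := rpow_one_add_le_one_add_mul_self hs hψ0.le hψ1.le
  rw [add_sub_cancel] at hber
  -- (v/u)^ψ ≤ 1 + ψ*(v/u - 1)
  have hdiv : (v / u) ^ ψ = v ^ ψ / u ^ ψ :=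
    Real.div_rpow (hu.trans huv).le hu.le ψ
  rw [hdiv] at hber
  have huψ : (0:ℝ) < u ^ ψ := Real.rpow_pos_of_pos hu ψ
  have h1 : v ^ ψ ≤ u ^ ψ + ψ * u ^ ψ * (v / u - 1) := by
    have := mul_le_mul_of_nonneg_left hber huψ.le
    rw [mul_div_cancel₀ _ huψ.ne'] at this
    nlinarith
  have h2 : u ^ ψ * (v / u - 1) = u ^ (ψ - 1) * (v - u) := by
    have : u ^ (ψ - 1) = u ^ ψ / u := by
      rw [Real.rpow_sub hu, Real.rpow_one]
    rw [this]
    field_simp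
  nlinarith [h1, h2]

/-- The equilibrium job-distribution equation
`-λ = (((ξ-1)(γ-ψ(1-α))-ψ)/(γD)) (λ/λx)^ψ - ((1+(ξ-1)(1-α))/D) z_t - λθ`
with `D = 1+(1-α-γ)(ξ-1)` has a unique solution `λ ∈ [0,∞)`, and this solution
is strictly positive. -/
theorem stmt_1 (α γ ξ ψ lamx lamθ zt : ℝ)
    (hα : 0 < α) (hγ : 0 < γ) (hαγ : α + γ < 1) (hξ : 1 < ξ)
    (hψ0 : 0 < ψ) (hψ1 : ψ < 1) (hlamx : 0 < lamx) (hlamθ : 0 < lamθ)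
    (hz : 0 < zt) :
    (∃! lam : ℝ, 0 ≤ lam ∧
        -lam = (((ξ - 1) * (γ - ψ * (1 - α)) - ψ) / (γ * (1 + (1 - α - γ) * (ξ - 1))))
            * (lam / lamx) ^ ψ
          - ((1 + (ξ - 1) * (1 - α)) / (1 + (1 - α - γ) * (ξ - 1))) * zt - lamθ) ∧
      ∀ lam : ℝ, 0 ≤ lam →
        (-lam = (((ξ - 1) * (γ - ψ * (1 - α)) - ψ) / (γ * (1 + (1 - α - γ) * (ξ - 1))))
            * (lam / lamx) ^ ψ
          - ((1 + (ξ - 1) * (1 - α)) / (1 + (1 - α - γ) * (ξ - 1))) * zt - lamθ) →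
        0 < lam := by
  set c : ℝ := ((ξ - 1) * (γ - ψ * (1 - α)) - ψ) / (γ * (1 + (1 - α - γ) * (ξ - 1))) with hc
  set K : ℝ := ((1 + (ξ - 1) * (1 - α)) / (1 + (1 - α - γ) * (ξ - 1))) * zt + lamθ with hKdef
  clear_value c K
  have hD0 : (0:ℝ) < 1 + (1 - α - γ) * (ξ - 1) := by nlinarith
  have hK0 : 0 < K := by
    have h1 : (0:ℝ) < 1 + (ξ - 1) * (1 - α) := by nlinarith
    have := mul_pos (div_pos h1 hD0) hz
    rw [hKdef]; linarith
  -- reformulate the equation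
  have hiff : ∀ lam : ℝ,
      (-lam = c * (lam / lamx) ^ ψ
          - ((1 + (ξ - 1) * (1 - α)) / (1 + (1 - α - γ) * (ξ - 1))) * zt - lamθ)
        ↔ lam + c * (lam / lamx) ^ ψ = K := by
    intro lam
    rw [hKdef]
    constructor <;> intro h <;> linarith
  set f : ℝ → ℝ := fun lam => lam + c * (lam / lamx) ^ ψ with hf
  -- any nonnegative solution is positive
  have hpos : ∀ lam : ℝ, 0 ≤ lam → f lam = K → 0 < lam := by
    intro lam hlam hroot
    rcases hlam.lt_or_eq with h | h
    · exact h
    · exfalso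
      rw [← h] at hroot
      simp only [hf] at hroot
      rw [zero_div, Real.zero_rpow hψ0.ne'] at hroot
      simp at hroot
      linarith
  -- uniqueness of nonnegative solutions
  have huniq : ∀ a b : ℝ, 0 ≤ a → f a = K → 0 ≤ b → f b = K → a = b := by
    have key : ∀ a b : ℝ, 0 ≤ a → f a = K → 0 ≤ b → f b = K → a < b → False := by
      intro a b ha hfa hb hfb hab
      have ha0 : 0 < a := hpos a ha hfa
      set u : ℝ := a / lamx with hu
      set v : ℝ := b / lamx with hv
      have hu0 : 0 < u := div_pos ha0 hlamx
      have huv : u < v := by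
        rw [hu, hv]; gcongr
      have hrpow_lt : u ^ ψ < v ^ ψ := Real.rpow_lt_rpow hu0.le huv hψ0
      simp only [hf] at hfa hfb
      -- f a = lamx * u + c * u^ψ, etc.
      have hea : lamx * u + c * u ^ ψ = K := by
        rw [hu, mul_div_cancel₀ _ hlamx.ne']; exact hfa
      have heb : lamx * v + c * v ^ ψ = K := by
        rw [hv, mul_div_cancel₀ _ hlamx.ne']; exact hfb
      rcases le_or_gt 0 c with hc0 | hc0
      · -- c ≥ 0 : f strictly increasing, contradiction
        nlinarith [mul_le_mul_of_nonneg_left hrpow_lt.le hc0,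
          mul_lt_mul_of_pos_left huv hlamx]
      · -- c < 0 : use the concavity bound
        set d : ℝ := -c with hd
        have hd0 : 0 < d := by rw [hd]; linarith
        -- from the equation at a : lamx * u = K + d * u^ψ > d * u^ψ
        have hdu : d * u ^ ψ < lamx * u := by
          have : lamx * u = K + d * u ^ ψ := by rw [hd]; linarith
          nlinarith
        -- so d < lamx * u^(1-ψ)
        have hduψ : d < lamx * u ^ (1 - ψ) := by
          have huψpos : (0:ℝ) < u ^ ψ := Real.rpow_pos_of_pos hu0 ψ
          have h1 : u ^ (1 - ψ) * u ^ ψ = u := by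
            rw [← Real.rpow_add hu0, sub_add_cancel, Real.rpow_one]
          exact (mul_lt_mul_iff_of_pos_right huψpos).mp
            (by rw [mul_assoc, h1]; exact hdu)
        -- subtract the two equations: lamx * (v - u) = d * (v^ψ - u^ψ)
        have hsub : lamx * (v - u) = d * (v ^ ψ - u ^ ψ) := by
          rw [hd]; linear_combination heb - hea
        have hber := aux_rpow_sub_le u v ψ hu0 huv hψ0 hψ1
        -- combine
        have hvu : 0 < v - u := by linarith
        have h2 : d * (v ^ ψ - u ^ ψ) < lamx * u ^ (1 - ψ) * (ψ * u ^ (ψ - 1) * (v - u)) := by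
          calc d * (v ^ ψ - u ^ ψ) ≤ d * (ψ * u ^ (ψ - 1) * (v - u)) := by
                exact mul_le_mul_of_nonneg_left hber hd0.le
            _ < lamx * u ^ (1 - ψ) * (ψ * u ^ (ψ - 1) * (v - u)) := by
                apply mul_lt_mul_of_pos_right hduψ
                have : (0:ℝ) < u ^ (ψ - 1) := Real.rpow_pos_of_pos hu0 _
                positivity
        have h3 : u ^ (1 - ψ) * u ^ (ψ - 1) = 1 := by
          rw [← Real.rpow_add hu0]
          norm_num
        have h4 : lamx * u ^ (1 - ψ) * (ψ * u ^ (ψ - 1) * (v - u))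
            = lamx * ψ * (v - u) := by
          have : lamx * u ^ (1 - ψ) * (ψ * u ^ (ψ - 1) * (v - u))
              = lamx * ψ * (v - u) * (u ^ (1 - ψ) * u ^ (ψ - 1)) := by ring
          rw [this, h3, mul_one]
        rw [← hsub] at h2
        -- lamx * (v-u) < lamx * ψ * (v-u) with ψ < 1: contradiction
        nlinarith [mul_pos (mul_pos hlamx hvu) (by linarith : (0:ℝ) < 1 - ψ)]
    intro a b ha hfa hb hfb
    rcases lt_trichotomy a b with h | h | h
    · exact absurd (key a b ha hfa hb hfb h) (not_false)
    · exact h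
    · exact absurd (key b a hb hfb ha hfa h) (not_false)
  -- existence via IVT
  have hcont : Continuous f := by
    apply continuous_id.add
    apply Continuous.mul continuous_const
    exact (Real.continuous_rpow_const hψ0.le).comp (continuous_id.div_const lamx)
  set e : ℝ := |c| / lamx ^ ψ with he
  have he0 : 0 ≤ e := by
    have : (0:ℝ) < lamx ^ ψ := Real.rpow_pos_of_pos hlamx ψ
    rw [he]; positivity
  clear_value e
  set M : ℝ := 2 * K + (2 * e) ^ (1 - ψ)⁻¹ with hM
  clear_value M
  have hM2K : 2 * K ≤ M := by
    have : (0:ℝ) ≤ (2 * e) ^ (1 - ψ)⁻¹ := Real.rpow_nonneg (by linarith) _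
    rw [hM]; linarith
  have hM0 : 0 < M := by linarith
  have hMe : 2 * e ≤ M ^ (1 - ψ) := by
    have h1 : (2 * e) ^ (1 - ψ)⁻¹ ≤ M := by
      have : (0:ℝ) < 2 * K := by linarith
      linarith
    have h2 : ((2 * e) ^ (1 - ψ)⁻¹) ^ (1 - ψ) ≤ M ^ (1 - ψ) :=
      Real.rpow_le_rpow (Real.rpow_nonneg (by linarith) _) h1 (by linarith)
    rwa [Real.rpow_inv_rpow (by linarith) (by linarith : (1:ℝ) - ψ ≠ 0)] at h2
  have hfM : K ≤ f M := by
    simp only [hf]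
    have hdivr : (M / lamx) ^ ψ = M ^ ψ / lamx ^ ψ := Real.div_rpow hM0.le hlamx.le ψ
    rw [hdivr]
    have hMψ : (0:ℝ) < M ^ ψ := Real.rpow_pos_of_pos hM0 ψ
    have hbound : |c| * (M ^ ψ / lamx ^ ψ) ≤ M / 2 := by
      have h1 : |c| * (M ^ ψ / lamx ^ ψ) = e * M ^ ψ := by rw [he]; ring
      rw [h1]
      have h2 : e * M ^ ψ ≤ M ^ (1 - ψ) / 2 * M ^ ψ := by
        apply mul_le_mul_of_nonneg_right _ hMψ.le
        linarith
      have h3 : M ^ (1 - ψ) / 2 * M ^ ψ = M / 2 := by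
        rw [div_mul_eq_mul_div, ← Real.rpow_add hM0, sub_add_cancel, Real.rpow_one]
      linarith [h2, h3 ▸ h2]
    have habs : -(|c| * (M ^ ψ / lamx ^ ψ)) ≤ c * (M ^ ψ / lamx ^ ψ) := by
      have h1 : -|c| ≤ c := neg_abs_le c
      have h2 : (0:ℝ) ≤ M ^ ψ / lamx ^ ψ := by positivity
      nlinarith
    have hMK : 2 * K ≤ M := hM2K
    linarith
  have hIVT : ∃ lam ∈ Set.Icc (0:ℝ) M, f lam = K := by
    have h0 : f 0 = 0 := by
      simp only [hf]
      rw [zero_div, Real.zero_rpow hψ0.ne']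
      ring
    have hKmem : K ∈ Set.Icc (f 0) (f M) := by
      rw [h0]; exact ⟨hK0.le, hfM⟩
    have := intermediate_value_Icc hM0.le hcont.continuousOn hKmem
    obtain ⟨lam, hlam, hflam⟩ := this
    exact ⟨lam, hlam, hflam⟩
  obtain ⟨lam, hlamIcc, hflam⟩ := hIVT
  constructor
  · refine ⟨lam, ⟨hlamIcc.1, (hiff lam).mpr hflam⟩, ?_⟩
    intro y hy
    exact huniq y lam hy.1 ((hiff y).mp hy.2) hlamIcc.1 hflam
  · intro l hl heq
    exact hpos l hl ((hiff l).mp heq)
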